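/- Let x ∈ ℂ^N with all entries nonzero, written entrywise as x_n = b_n e^{jθ_n} with b_n > 0, let A ∈ ℂ^{N×M}, and define G ∈ ℝ^{2N×M} with top block Re(diag(e^{−jθ}) A diag(A^H x)) and bottom block Im(diag(x̄) A diag(A^H x)). Then the vector v = [0_N; 1_N] ∈ ℝ^{2N} satisfies G^T v = 0; equivalently v is in the null space of the Fisher information matrix F = (4/σ²) G G^T. -/
import Mathlib


open Matrix

/-- The 2N×M matrix G with top block Re(diag(e^{−jθ}) A diag(Aᴴx)) and bottom block
Im(diag(x̄) A diag(Aᴴx)). -/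
noncomputable def Gphase {N M : ℕ} (x : Fin N → ℂ) (θ : Fin N → ℝ)
    (A : Matrix (Fin N) (Fin M) ℂ) : Matrix (Fin N ⊕ Fin N) (Fin M) ℝ :=
  Matrix.of fun p i =>
    Sum.elim
      (fun n => (Complex.exp (-(θ n : ℂ) * Complex.I) * A n i * (∑ k, star (A k i) * x k)).re)
      (fun n => (star (x n) * A n i * (∑ k, star (A k i) * x k)).im) p

/-- the vector v = [0_N; 1_N] satisfies Gᵀv = 0, i.e. v is in the null space of
the amplitude-phase Fisher information matrix F = (4/σ²) G Gᵀ. -/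
theorem stmt_4 (N M : ℕ) (x : Fin N → ℂ) (b θ : Fin N → ℝ)
    (hb : ∀ n, 0 < b n)
    (hx : ∀ n, x n = (b n : ℂ) * Complex.exp ((θ n : ℂ) * Complex.I))
    (A : Matrix (Fin N) (Fin M) ℂ) (σ : ℝ) (hσ : 0 < σ) :
    (Gphase x θ A)ᵀ.mulVec (Sum.elim (fun _ => (0:ℝ)) (fun _ => (1:ℝ))) = 0 ∧
    ((4/σ^2) • (Gphase x θ A * (Gphase x θ A)ᵀ)).mulVec
      (Sum.elim (fun _ => (0:ℝ)) (fun _ => (1:ℝ))) = 0 := by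
  have h1 : (Gphase x θ A)ᵀ.mulVec (Sum.elim (fun _ => (0:ℝ)) (fun _ => (1:ℝ))) = 0 := by
    funext i
    simp only [mulVec, dotProduct, transpose_apply, Fintype.sum_sum_type,
      Sum.elim_inl, Sum.elim_inr, mul_zero, mul_one, Finset.sum_const_zero, zero_add,
      Gphase, of_apply, Pi.zero_apply]
    have : ∑ n, (star (x n) * A n i * (∑ k, star (A k i) * x k)).im
        = ((∑ n, star (x n) * A n i) * (∑ k, star (A k i) * x k)).im := by
      rw [Finset.sum_mul, Complex.im_sum]
    rw [this]
    have h2 : (∑ n, star (x n) * A n i) = star (∑ k, star (A k i) * x k) := by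
      rw [star_sum]
      refine Finset.sum_congr rfl fun n _ => ?_
      simp [mul_comm]
    rw [h2]
    rw [mul_comm, Complex.star_def, Complex.mul_conj]; simp
  refine ⟨h1, ?_⟩
  rw [smul_mulVec, ← mulVec_mulVec, h1, mulVec_zero, smul_zero]
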